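/- On the addition-free theta-term system T, the linear order < extends the partial tree-order ⊴: if α ⊴ β then α ≤ β. -/
import Mathlib


/-- Addition-free theta terms. -/
inductive TTerm : Type
  | zero : TTerm
  | theta : ℕ → TTerm → TTerm
  deriving DecidableEq

namespace TTerm

/-- `S 0 = -1`, `S (ϑ_i α) = i`. -/
def S : TTerm → ℤ
  | zero => -1
  | theta i _ => i

/-- Membership in the term system `T`: `ϑ_i α` is formed only when `S α ≤ i + 1`. -/
inductive WF : TTerm → Prop
  | zero : WF zero
  | theta {i : ℕ} {a : TTerm} : WF a → S a ≤ (i : ℤ) + 1 → WF (theta i a)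

/-- Coefficients `k_i`. -/
def k (i : ℕ) : TTerm → TTerm
  | zero => zero
  | theta j b => if j ≤ i then theta j b else k i b

mutual
/-- The linear order on theta terms. -/
inductive Lt : TTerm → TTerm → Prop
  | zero {a : TTerm} : a ≠ zero → Lt zero a
  | idx {i j : ℕ} {a b : TTerm} : i < j → Lt (theta i a) (theta j b)
  | left {i : ℕ} {a b : TTerm} : Lt a b → Lt (k i a) (theta i b) →
      Lt (theta i a) (theta i b)
  | right {i : ℕ} {a b : TTerm} : Lt b a → Le (theta i a) (k i b) →
      Lt (theta i a) (theta i b)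

inductive Le : TTerm → TTerm → Prop
  | refl {a : TTerm} : Le a a
  | of_lt {a b : TTerm} : Lt a b → Le a b
end

end TTerm

/-- The tree-ordering `⊴` on theta terms. -/
inductive TTerm.Sub : TTerm → TTerm → Prop
  | zero {a : TTerm} : TTerm.Sub TTerm.zero a
  | coeff {i : ℕ} {a b : TTerm} : TTerm.Sub a (TTerm.k i b) → TTerm.Sub a (TTerm.theta i b)
  | mono {i : ℕ} {a b : TTerm} : TTerm.Sub a b → TTerm.Sub (TTerm.theta i a) (TTerm.theta i b)

namespace TTerm

theorem theta_ne_zero {i : ℕ} {a : TTerm} : theta i a ≠ zero := fun h => nomatch h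

/-- size of a term -/
def size : TTerm → ℕ
  | zero => 1
  | theta _ a => size a + 1

theorem one_le_size (a : TTerm) : 1 ≤ size a := by cases a <;> simp [size]

theorem size_k_le (i : ℕ) (b : TTerm) : size (k i b) ≤ size b := by
  induction b with
  | zero => exact le_rfl
  | theta j c ih =>
    simp only [k]
    split
    · exact le_rfl
    · exact ih.trans (by simp [size])

theorem kShape (i : ℕ) (b : TTerm) :
    k i b = zero ∨ ∃ j c, j ≤ i ∧ k i b = theta j c := by
  induction b with
  | zero => exact Or.inl rfl
  | theta j c ih =>
    by_cases hj : j ≤ i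
    · exact Or.inr ⟨j, c, hj, by simp [k, hj]⟩
    · simpa [k, hj] using ih

/-- Totality of the linear order. -/
theorem tot : ∀ (n : ℕ) (a b : TTerm), size a + size b ≤ n →
    Lt a b ∨ a = b ∨ Lt b a := by
  intro n
  induction n using Nat.strong_induction_on with
  | _ n ih =>
  intro a b hn
  match a, b with
  | zero, zero => exact Or.inr (Or.inl rfl)
  | zero, theta j b' => exact Or.inl (Lt.zero theta_ne_zero)
  | theta i a', zero => exact Or.inr (Or.inr (Lt.zero theta_ne_zero))
  | theta i a', theta j b' =>
    rcases Nat.lt_trichotomy i j with hij | rfl | hij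
    · exact Or.inl (Lt.idx hij)
    · have hsz : size a' + size b' < n := by simp [size] at hn; omega
      rcases ih _ hsz a' b' le_rfl with h1 | rfl | h1
      · have hsz2 : size (k i a') + size (theta i b') < n := by
          have := size_k_le i a'
          simp [size] at hn ⊢; omega
        rcases ih _ hsz2 (k i a') (theta i b') le_rfl with h2 | h2 | h2
        · exact Or.inl (Lt.left h1 h2)
        · exact Or.inr (Or.inr (Lt.right h1 (by rw [h2]; exact Le.refl)))
        · exact Or.inr (Or.inr (Lt.right h1 (Le.of_lt h2)))
      · exact Or.inr (Or.inl rfl)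
      · have hsz2 : size (k i b') + size (theta i a') < n := by
          have := size_k_le i b'
          simp [size] at hn ⊢; omega
        rcases ih _ hsz2 (k i b') (theta i a') le_rfl with h2 | h2 | h2
        · exact Or.inr (Or.inr (Lt.left h1 h2))
        · exact Or.inl (Lt.right h1 (by rw [h2]; exact Le.refl))
        · exact Or.inl (Lt.right h1 (Le.of_lt h2))
    · exact Or.inr (Or.inr (Lt.idx hij))

theorem subRefl : ∀ a : TTerm, Sub a a
  | zero => Sub.zero
  | theta _ a => Sub.mono (subRefl a)

theorem sub_zero {a : TTerm} (h : Sub a zero) : a = zero := by cases h; rfl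

theorem kk {i j : ℕ} (hij : i ≤ j) : ∀ b : TTerm, k i (k j b) = k i b := by
  intro b
  induction b with
  | zero => rfl
  | theta m d ih =>
    by_cases hm : m ≤ j
    · simp [k, hm]
    · have hmi : ¬ m ≤ i := fun h => hm (h.trans hij)
      simp [k, hm, hmi, ih]

theorem kkge {i j : ℕ} (hji : j ≤ i) (b : TTerm) : k i (k j b) = k j b := by
  rcases kShape j b with h0 | ⟨j', c, hj', he⟩
  · rw [h0]; rfl
  · rw [he]; simp [k, hj'.trans hji]

theorem kSub (i : ℕ) {a b : TTerm} (h : Sub a b) : Sub (k i a) (k i b) := by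
  induction h with
  | zero => exact Sub.zero
  | @coeff j a' b' hs ih =>
    by_cases hj : j ≤ i
    · rw [kkge hj] at ih
      simp only [k, if_pos hj]
      exact Sub.coeff ih
    · rw [kk (by omega)] at ih
      simpa [k, hj] using ih
  | @mono j a' b' hs ih =>
    by_cases hj : j ≤ i
    · simpa [k, hj] using Sub.mono hs
    · simpa [k, hj] using ih

theorem subTrans : ∀ (n : ℕ) {a b c : TTerm}, size b + size c ≤ n →
    Sub a b → Sub b c → Sub a c := by
  intro n
  induction n using Nat.strong_induction_on with
  | _ n ih =>
  intro a b c hn hab hbc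
  cases hbc with
  | zero => rw [sub_zero hab]; exact Sub.zero
  | @coeff j bb d hs =>
    have hsz : size b + size (k j d) < n := by
      have := size_k_le j d
      simp [size] at hn; omega
    exact Sub.coeff (ih _ hsz le_rfl hab hs)
  | @mono j b' c' hs =>
    cases hab with
    | zero => exact Sub.zero
    | coeff hs2 =>
      have hks := kSub j hs
      have hsz : size (k j b') + size (k j c') < n := by
        have := size_k_le j b'
        have := size_k_le j c'
        simp [size] at hn; omega
      exact Sub.coeff (ih _ hsz le_rfl hs2 hks)
    | mono hs2 =>
      have hsz : size b' + size c' < n := by simp [size] at hn; omega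
      exact Sub.mono (ih _ hsz le_rfl hs2 hs)

theorem indexSub : ∀ {y a : TTerm}, Sub a y → ∀ {l : ℕ} {x : TTerm},
    a = theta l x → ∃ j c, y = theta j c ∧ l ≤ j := by
  intro y a h
  induction h with
  | zero => intro l x he; exact absurd he.symm theta_ne_zero
  | @coeff i aa b hs ih =>
    intro l x he
    obtain ⟨j, c, hkeq, hlj⟩ := ih he
    rcases kShape i b with h0 | ⟨j2, c2, hj2, he2⟩
    · rw [h0] at hkeq; exact absurd hkeq.symm theta_ne_zero
    · rw [he2] at hkeq
      injection hkeq with h1 h2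
      exact ⟨i, b, rfl, by omega⟩
  | @mono i a' b' hs ih =>
    intro l x he
    injection he with h1 h2
    exact ⟨i, b', rfl, by omega⟩

theorem sizeSub {a b : TTerm} (h : Sub a b) : size a ≤ size b := by
  induction h with
  | zero => exact one_le_size _
  | @coeff i a' b' hs ih =>
    exact ih.trans ((size_k_le i b').trans (by simp [size]))
  | mono hs ih => simpa [size] using ih

/-- The main lemma, proved by lexicographic strong induction:
first component bounds the size of the right-hand term,
second bounds the size of the left-hand (inner) term. -/
theorem mainLemma : ∀ (p q : ℕ),
    (∀ a b : TTerm, size b ≤ p → size a ≤ q → Sub a b → Le a b) ∧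
    (∀ (i : ℕ) (a b : TTerm), size b ≤ p → size a ≤ q →
        Sub (theta i a) (k i b) → Lt (theta i a) (theta i b)) := by
  intro p
  induction p using Nat.strong_induction_on with
  | _ p ihp =>
  intro q
  induction q using Nat.strong_induction_on with
  | _ q ihq =>
  constructor
  · -- MAIN : Sub a b → Le a b
    intro a b hb ha h
    cases h with
    | zero =>
      by_cases hb0 : b = zero
      · rw [hb0]; exact Le.refl
      · exact Le.of_lt (Lt.zero hb0)
    | @coeff i aa b' hs =>
      have hblt : size b' < p := by simp [size] at hb; omega
      cases a with
      | zero => exact Le.of_lt (Lt.zero theta_ne_zero)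
      | theta l a' =>
        obtain ⟨j, c, hkeq, hlj⟩ := indexSub hs rfl
        have hji : j ≤ i := by
          rcases kShape i b' with h0 | ⟨j2, c2, hj2, he2⟩
          · rw [h0] at hkeq; exact absurd hkeq.symm theta_ne_zero
          · rw [he2] at hkeq; injection hkeq with h1 h2; omega
        rcases lt_or_eq_of_le (hlj.trans hji) with hli | rfl
        · exact Le.of_lt (Lt.idx hli)
        · exact Le.of_lt ((ihp (size b') hblt (size a')).2 l a' b' le_rfl le_rfl hs)
    | @mono i a' b' hs =>
      have hblt : size b' < p := by simp [size] at hb; omega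
      by_cases he : a' = b'
      · rw [he]; exact Le.refl
      · have hab : Lt a' b' := by
          have hle := (ihp (size b') hblt (size a')).1 a' b' le_rfl le_rfl hs
          cases hle with
          | refl => exact absurd rfl he
          | of_lt h' => exact h'
        apply Le.of_lt (Lt.left hab ?_)
        have hks : Sub (k i a') (k i b') := kSub i hs
        rcases kShape i a' with h0 | ⟨j, g, hj, he2⟩
        · rw [h0]; exact Lt.zero theta_ne_zero
        · rcases lt_or_eq_of_le hj with hji | rfl
          · rw [he2]; exact Lt.idx hji
          · rw [he2]; rw [he2] at hks
            exact (ihp (size b') hblt (size g)).2 j g b' le_rfl le_rfl hks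
  · -- MAINC : Sub (theta i a) (k i b) → Lt (theta i a) (theta i b)
    intro i a b hb ha h
    obtain ⟨j, c, hkeq, hij⟩ := indexSub h rfl
    have hji : j ≤ i := by
      rcases kShape i b with h0 | ⟨j2, c2, hj2, he2⟩
      · rw [h0] at hkeq; exact absurd hkeq.symm theta_ne_zero
      · rw [he2] at hkeq; injection hkeq with h1 h2; omega
    have hjeq : j = i := le_antisymm hji hij
    subst hjeq
    cases b with
    | zero => exact absurd hkeq.symm theta_ne_zero
    | theta m d =>
      have hclt : size c < size (theta m d) := by
        have h1 : size (k j (theta m d)) ≤ size (theta m d) := size_k_le _ _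
        rw [hkeq] at h1
        simp [size] at h1 ⊢; omega
      by_cases hm : m ≤ j
      · -- here k j (theta m d) = theta m d = theta j c
        have hbb : k j (theta m d) = theta m d := by simp [k, hm]
        rw [hbb] at hkeq h
        injection hkeq with hm2 hd2
        subst hm2
        -- h : Sub (theta m a) (theta m d), goal Lt (theta m a) (theta m (theta m d))
        have hclt' : size d < p := by simp [size] at hb; omega
        cases h with
        | coeff hs =>
          -- hs : Sub (theta m a) (k m d)
          have X : Lt (theta m a) (theta m d) :=
            (ihp (size d) hclt' (size a)).2 m a d le_rfl le_rfl hs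
          have hkc : k m (theta m d) = theta m d := by simp [k]
          rcases tot (size a + size (theta m d)) a (theta m d) le_rfl with h1 | h1 | h1
          · apply Lt.left h1
            rcases kShape m a with h0 | ⟨j', g, hj', he2⟩
            · rw [h0]; exact Lt.zero theta_ne_zero
            · rcases lt_or_eq_of_le hj' with hji' | rfl
              · rw [he2]; exact Lt.idx hji'
              · rw [he2]
                have s1 : Sub (k j' a) (theta j' a) := Sub.coeff (subRefl _)
                have s2 : Sub (k j' d) (theta j' d) := Sub.coeff (subRefl _)
                have s3 : Sub (k j' a) (k j' d) := by
                  refine subTrans (size (theta j' a) + size (k j' d)) le_rfl s1 hs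
                have s4 : Sub (k j' a) (theta j' d) := by
                  refine subTrans (size (k j' d) + size (theta j' d)) le_rfl s3 s2
                rw [he2] at s4
                have hgq : size g < q := by
                  have h5 : size (k j' a) ≤ size a := size_k_le _ _
                  rw [he2] at h5; simp [size] at h5; omega
                refine (ihq (size g) hgq).2 j' g (theta j' d) hb le_rfl ?_
                rw [hkc]
                exact s4
          · exfalso
            have h2 : size (theta m a) ≤ size (k m d) := sizeSub hs
            have h3 : size (k m d) ≤ size d := size_k_le _ _
            rw [h1] at h2
            simp [size] at h2 h3; omega
          · exact Lt.right h1 (by rw [hkc]; exact Le.of_lt X)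
        | mono hs =>
          -- hs : Sub a d
          have hkc : k m (theta m d) = theta m d := by simp [k]
          by_cases hac : a = d
          · subst hac
            rcases tot (size a + size (theta m a)) a (theta m a) le_rfl with h1 | h1 | h1
            · apply Lt.left h1
              rcases kShape m a with h0 | ⟨j', f, hj', he2⟩
              · rw [h0]; exact Lt.zero theta_ne_zero
              · rcases lt_or_eq_of_le hj' with hji' | rfl
                · rw [he2]; exact Lt.idx hji'
                · rw [he2]
                  have s1 : Sub (k j' a) (theta j' a) := Sub.coeff (subRefl _)
                  rw [he2] at s1
                  have hfq : size f < q := by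
                    have h5 : size (k j' a) ≤ size a := size_k_le _ _
                    rw [he2] at h5; simp [size] at h5; omega
                  refine (ihq (size f) hfq).2 j' f (theta j' a) hb le_rfl ?_
                  rw [hkc]
                  exact s1
            · exfalso
              have := congrArg size h1
              simp [size] at this
            · exact Lt.right h1 (by rw [hkc]; exact Le.refl)
          · have hlt : Lt a d := by
              have hle := (ihp (size d) hclt' (size a)).1 a d le_rfl le_rfl hs
              cases hle with
              | refl => exact absurd rfl hac
              | of_lt h' => exact h'
            have hks : Sub (k m a) (k m d) := kSub m hs
            have X : Lt (theta m a) (theta m d) := by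
              apply Lt.left hlt
              rcases kShape m a with h0 | ⟨j', g, hj', he2⟩
              · rw [h0]; exact Lt.zero theta_ne_zero
              · rcases lt_or_eq_of_le hj' with hji' | rfl
                · rw [he2]; exact Lt.idx hji'
                · rw [he2]; rw [he2] at hks
                  exact (ihp (size d) hclt' (size g)).2 j' g d le_rfl le_rfl hks
            rcases tot (size a + size (theta m d)) a (theta m d) le_rfl with h1 | h1 | h1
            · apply Lt.left h1
              rcases kShape m a with h0 | ⟨j', g, hj', he2⟩
              · rw [h0]; exact Lt.zero theta_ne_zero
              · rcases lt_or_eq_of_le hj' with hji' | rfl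
                · rw [he2]; exact Lt.idx hji'
                · rw [he2]; rw [he2] at hks
                  have hgq : size g < q := by
                    have h5 : size (k j' a) ≤ size a := size_k_le _ _
                    rw [he2] at h5; simp [size] at h5; omega
                  refine (ihq (size g) hgq).2 j' g (theta j' d) hb le_rfl ?_
                  rw [hkc]
                  exact Sub.coeff hks
            · exfalso
              have h2 : size a ≤ size d := sizeSub hs
              have := congrArg size h1
              simp [size] at this; omega
            · exact Lt.right h1 (by rw [hkc]; exact Le.of_lt X)
      · -- m > j : k j (theta m d) = k j d
        have hkb : k j (theta m d) = k j d := by simp [k, hm]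
        rw [hkb] at hkeq h
        -- h : Sub (theta j a) (k j d)
        rcases tot (size a + size (theta m d)) a (theta m d) le_rfl with h1 | h1 | h1
        · apply Lt.left h1
          rcases kShape j a with h0 | ⟨j', g, hj', he2⟩
          · rw [h0]; exact Lt.zero theta_ne_zero
          · rcases lt_or_eq_of_le hj' with hji' | rfl
            · rw [he2]; exact Lt.idx hji'
            · rw [he2]
              have s1 : Sub (k j' a) (theta j' a) := Sub.coeff (subRefl _)
              have s3 : Sub (k j' a) (k j' d) := by
                refine subTrans (size (theta j' a) + size (k j' d)) le_rfl s1 h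
              rw [he2] at s3
              have hgq : size g < q := by
                have h5 : size (k j' a) ≤ size a := size_k_le _ _
                rw [he2] at h5; simp [size] at h5; omega
              refine (ihq (size g) hgq).2 j' g (theta m d) hb le_rfl ?_
              rw [hkb]
              exact s3
        · exfalso
          have h2 : size (theta j a) ≤ size (k j d) := sizeSub h
          have h3 : size (k j d) ≤ size d := size_k_le _ _
          have := congrArg size h1
          simp [size] at this h2; omega
        · refine Lt.right h1 ?_
          rw [hkb]
          have hdlt : size (k j d) < p := by
            have := size_k_le j d
            simp [size] at hb; omega
          exact (ihp (size (k j d)) hdlt (size (theta j a))).1 _ _ le_rfl le_rfl h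

end TTerm

/-- The linear order `<` on `T` extends the tree-order `⊴`. -/
theorem stmt7 (α β : TTerm) (hα : TTerm.WF α) (hβ : TTerm.WF β)
    (h : TTerm.Sub α β) : TTerm.Le α β :=
  (TTerm.mainLemma (TTerm.size β) (TTerm.size α)).1 α β le_rfl le_rfl h
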